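/- Let D^i(C, t) = (q_1,...,q_r, z_{r+1}(C,t),...,z_{k+r}(C,t)) where z_j(C,t) = x_j + t(j−1)ε(C)e_1 for a configuration C = (q_1,...,q_r,x_{r+1},...,x_{k+r}) ∈ A_i^∘ with r ≤ i < k+r. Then D^i(C, t) ∈ F(ℝ^d − Q_r, k) for all t ∈ [0,1], and D^i(C, 1) has all k+r first coordinates pairwise distinct (i.e., D^i(C,1) ∈ A_{k+r}^∘). -/

import Mathlib

/-- The embedding `ℝ → ℝᵈ`, `a ↦ (a,0,…,0)`. -/
def embLine (d : ℕ) (hd : 0 < d) (a : ℝ) : Fin d → ℝ :=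
  fun j => if j = ⟨0, hd⟩ then a else 0

/-- The first standard basis vector `e_1 = (1,0,…,0)` of `ℝᵈ`. -/
def e1 (d : ℕ) (hd : 0 < d) : Fin d → ℝ :=
  fun j => if j = ⟨0, hd⟩ then 1 else 0

/-- `ε(C) = (1/(k+r)) · min { |p(x_a) − p(x_b)| : p(x_a) ≠ p(x_b) }`. -/
noncomputable def eps (d k r : ℕ) (hd : 0 < d)
    (C : Fin r ⊕ Fin k → (Fin d → ℝ)) : ℝ :=
  (1 / ((k : ℝ) + r)) *
    sInf {v : ℝ | ∃ a b, C a ⟨0, hd⟩ ≠ C b ⟨0, hd⟩ ∧ v = |C a ⟨0, hd⟩ - C b ⟨0, hd⟩|}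

/-- The desingularization deformation `D^i(C,t)`: the obstacles stay put, and the
moving point with label `j = r+1+a` is shifted by `t(j−1)ε(C)e_1`. -/
noncomputable def Dmap (d k r : ℕ) (hd : 0 < d) (q : Fin r → ℝ)
    (C : Fin r ⊕ Fin k → (Fin d → ℝ)) (t : ℝ) :
    Fin r ⊕ Fin k → (Fin d → ℝ) :=
  Sum.elim (fun j => embLine d hd (q j))
    (fun a => C (Sum.inr a) + (t * ((r : ℝ) + (a : ℕ)) * eps d k r hd C) • e1 d hd)

/-- For `C ∈ A_i^∘` with `r ≤ i < k+r`, the deformation `D^i(C,t)` stays in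
`F(ℝᵈ − Q_r, k)` for all `t ∈ [0,1]`, and `D^i(C,1)` has all `k+r` first
coordinates pairwise distinct, i.e. `D^i(C,1) ∈ A_{k+r}^∘`. -/
theorem stmt16 (d k r : ℕ) (hd : 0 < d) (hr : 2 ≤ r)
    (q : Fin r → ℝ)
    (hq : ∀ a : Fin r, q a = q ⟨0, by omega⟩ + (a : ℕ))
    (C : Fin r ⊕ Fin k → (Fin d → ℝ)) (hC : Function.Injective C)
    (hfib : ∀ j, C (Sum.inl j) = embLine d hd (q j))
    (i : ℕ) (hcp : Set.ncard (Set.range fun a => C a ⟨0, hd⟩) = i)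
    (hir : r ≤ i) (hik : i < k + r) :
    (∀ t ∈ Set.Icc (0 : ℝ) 1, Function.Injective (Dmap d k r hd q C t)) ∧
    Function.Injective (fun a => Dmap d k r hd q C 1 a ⟨0, hd⟩) := by
  classical
  -- basic coordinate facts
  have hCq : ∀ j : Fin r, C (Sum.inl j) ⟨0, hd⟩ = q j := by
    intro j; rw [hfib]; simp [embLine]
  have hqinj : Function.Injective q := by
    intro a b hab
    have ha := hq a; have hb := hq b
    have : ((a : ℕ) : ℝ) = ((b : ℕ) : ℝ) := by rw [ha, hb] at hab; linarith
    exact Fin.ext (by exact_mod_cast this)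
  have hNpos : (0 : ℝ) < (k : ℝ) + r := by
    have h2 : (2 : ℝ) ≤ (r : ℝ) := by exact_mod_cast hr
    have hk0 : (0 : ℝ) ≤ (k : ℝ) := Nat.cast_nonneg k
    linarith
  set S : Set ℝ :=
    {v : ℝ | ∃ a b, C a ⟨0, hd⟩ ≠ C b ⟨0, hd⟩ ∧ v = |C a ⟨0, hd⟩ - C b ⟨0, hd⟩|} with hSdef
  have heps : eps d k r hd C = (1 / ((k : ℝ) + r)) * sInf S := rfl
  have hSfin : S.Finite := by
    have hsub : S ⊆ (fun p : (Fin r ⊕ Fin k) × (Fin r ⊕ Fin k) =>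
        |C p.1 ⟨0, hd⟩ - C p.2 ⟨0, hd⟩|) '' Set.univ := by
      rintro v ⟨a, b, _, rfl⟩
      exact ⟨(a, b), trivial, rfl⟩
    exact (Set.finite_univ.image _).subset hsub
  have hSne : S.Nonempty := by
    refine ⟨_, Sum.inl ⟨1, by omega⟩, Sum.inl ⟨0, by omega⟩, ?_, rfl⟩
    rw [hCq, hCq, hq ⟨1, by omega⟩, hq ⟨0, by omega⟩]
    simp
  have hmS : sInf S ∈ S := hSne.csInf_mem hSfin
  have hm0 : 0 < sInf S := by
    obtain ⟨a, b, hab, hv⟩ := hmS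
    rw [hv]
    exact abs_pos.mpr (sub_ne_zero.mpr hab)
  have hlow : ∀ a b, C a ⟨0, hd⟩ ≠ C b ⟨0, hd⟩ → sInf S ≤ |C a ⟨0, hd⟩ - C b ⟨0, hd⟩| :=
    fun a b h => csInf_le hSfin.bddBelow ⟨a, b, h, rfl⟩
  have hepspos : 0 < eps d k r hd C := by
    rw [heps]; positivity
  have hbig : ∀ a : Fin k, ((r : ℝ) + (a : ℕ)) * eps d k r hd C < sInf S := by
    intro a
    have ha : ((a : ℕ) : ℝ) < k := by exact_mod_cast a.isLt
    have hlt : ((r : ℝ) + (a : ℕ)) < (k : ℝ) + r := by linarith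
    have h1 : ((r : ℝ) + (a : ℕ)) * eps d k r hd C < ((k : ℝ) + r) * eps d k r hd C :=
      mul_lt_mul_of_pos_right hlt hepspos
    have h2 : ((k : ℝ) + r) * eps d k r hd C = sInf S := by
      rw [heps]; field_simp
    linarith
  have hpos : ∀ a : Fin k, 0 < ((r : ℝ) + (a : ℕ)) * eps d k r hd C := by
    intro a
    have h2 : (2 : ℝ) ≤ (r : ℝ) := by exact_mod_cast hr
    have : (0:ℝ) < (r : ℝ) + (a : ℕ) := by positivity
    exact mul_pos this hepspos
  -- evaluation of Dmap at the first coordinate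
  have hDinl : ∀ (t : ℝ) (j : Fin r), Dmap d k r hd q C t (Sum.inl j) ⟨0, hd⟩ = q j := by
    intro t j; simp [Dmap, embLine]
  have hDinr : ∀ (t : ℝ) (a : Fin k), Dmap d k r hd q C t (Sum.inr a) ⟨0, hd⟩ =
      C (Sum.inr a) ⟨0, hd⟩ + t * ((r : ℝ) + (a : ℕ)) * eps d k r hd C := by
    intro t a; simp [Dmap, e1]
  -- the mixed case cannot happen
  have hmixed : ∀ t ∈ Set.Icc (0 : ℝ) 1, ∀ (j : Fin r) (a : Fin k),
      Dmap d k r hd q C t (Sum.inl j) ⟨0, hd⟩ ≠ Dmap d k r hd q C t (Sum.inr a) ⟨0, hd⟩ ∨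
      True := fun _ _ _ _ => Or.inr trivial
  -- bound on the shift for t ∈ [0,1]
  have hsb : ∀ t ∈ Set.Icc (0 : ℝ) 1, ∀ a : Fin k,
      0 ≤ t * ((r : ℝ) + (a : ℕ)) * eps d k r hd C ∧
      t * ((r : ℝ) + (a : ℕ)) * eps d k r hd C < sInf S := by
    rintro t ⟨ht0, ht1⟩ a
    have h1 := hbig a
    have h2 := hpos a
    constructor
    · have : 0 ≤ ((r : ℝ) + (a : ℕ)) * eps d k r hd C := le_of_lt h2
      rw [mul_assoc]
      exact mul_nonneg ht0 this
    · calc t * ((r : ℝ) + (a : ℕ)) * eps d k r hd C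
          ≤ 1 * (((r : ℝ) + (a : ℕ)) * eps d k r hd C) := by
            rw [mul_assoc]
            exact mul_le_mul_of_nonneg_right ht1 (le_of_lt h2)
        _ < sInf S := by rw [one_mul]; exact h1
  constructor
  · rintro t ht x y h
    match x, y with
    | Sum.inl j, Sum.inl j' =>
      have h0 := congrFun h ⟨0, hd⟩
      rw [hDinl, hDinl] at h0
      exact congrArg Sum.inl (hqinj h0)
    | Sum.inl j, Sum.inr a =>
      exfalso
      have h0 := congrFun h ⟨0, hd⟩
      rw [hDinl, hDinr] at h0
      obtain ⟨hs0, hsm⟩ := hsb t ht a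
      by_cases hcc : C (Sum.inl j) ⟨0, hd⟩ = C (Sum.inr a) ⟨0, hd⟩
      · rw [hCq] at hcc
        have hszero : t * ((r : ℝ) + (a : ℕ)) * eps d k r hd C = 0 := by linarith
        have hDC : Dmap d k r hd q C t (Sum.inr a) = C (Sum.inr a) := by
          show C (Sum.inr a) + _ • e1 d hd = C (Sum.inr a)
          rw [hszero, zero_smul, add_zero]
        have hDj : Dmap d k r hd q C t (Sum.inl j) = C (Sum.inl j) := (hfib j).symm
        rw [hDj, hDC] at h
        exact Sum.inl_ne_inr (hC h)
      · have hle := hlow _ _ hcc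
        rw [hCq] at hle
        have : |q j - C (Sum.inr a) ⟨0, hd⟩| =
            t * ((r : ℝ) + (a : ℕ)) * eps d k r hd C := by
          rw [abs_of_nonneg (by linarith)]
          linarith
        linarith [this ▸ hle]
    | Sum.inr a, Sum.inl j =>
      exfalso
      have h0 := congrFun h ⟨0, hd⟩
      rw [hDinl, hDinr] at h0
      obtain ⟨hs0, hsm⟩ := hsb t ht a
      by_cases hcc : C (Sum.inl j) ⟨0, hd⟩ = C (Sum.inr a) ⟨0, hd⟩
      · rw [hCq] at hcc
        have hszero : t * ((r : ℝ) + (a : ℕ)) * eps d k r hd C = 0 := by linarith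
        have hDC : Dmap d k r hd q C t (Sum.inr a) = C (Sum.inr a) := by
          show C (Sum.inr a) + _ • e1 d hd = C (Sum.inr a)
          rw [hszero, zero_smul, add_zero]
        have hDj : Dmap d k r hd q C t (Sum.inl j) = C (Sum.inl j) := (hfib j).symm
        rw [hDj, hDC] at h
        exact Sum.inr_ne_inl (hC h)
      · have hle := hlow _ _ hcc
        rw [hCq] at hle
        have : |q j - C (Sum.inr a) ⟨0, hd⟩| =
            t * ((r : ℝ) + (a : ℕ)) * eps d k r hd C := by
          rw [abs_of_nonneg (by linarith)]
          linarith
        linarith [this ▸ hle]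
    | Sum.inr a, Sum.inr b =>
      have h0 := congrFun h ⟨0, hd⟩
      rw [hDinr, hDinr] at h0
      obtain ⟨hsa0, hsam⟩ := hsb t ht a
      obtain ⟨hsb0, hsbm⟩ := hsb t ht b
      by_cases hcc : C (Sum.inr a) ⟨0, hd⟩ = C (Sum.inr b) ⟨0, hd⟩
      · have hss : t * ((r : ℝ) + (a : ℕ)) * eps d k r hd C =
            t * ((r : ℝ) + (b : ℕ)) * eps d k r hd C := by linarith
        have hab : C (Sum.inr a) = C (Sum.inr b) := by
          have h' : C (Sum.inr a) + (t * ((r : ℝ) + (a : ℕ)) * eps d k r hd C) • e1 d hd =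
              C (Sum.inr b) + (t * ((r : ℝ) + (b : ℕ)) * eps d k r hd C) • e1 d hd := h
          rw [hss] at h'
          exact add_right_cancel h'
        exact hC hab
      · exfalso
        have hle := hlow _ _ hcc
        have habs : |C (Sum.inr a) ⟨0, hd⟩ - C (Sum.inr b) ⟨0, hd⟩| < sInf S := by
          rw [abs_sub_lt_iff]
          constructor <;> linarith
        linarith
  · intro x y h
    simp only at h
    match x, y with
    | Sum.inl j, Sum.inl j' =>
      rw [hDinl, hDinl] at h
      exact congrArg Sum.inl (hqinj h)
    | Sum.inl j, Sum.inr a =>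
      exfalso
      rw [hDinl, hDinr] at h
      have hs0 := hpos a
      have hsm := hbig a
      rw [one_mul] at h
      by_cases hcc : C (Sum.inl j) ⟨0, hd⟩ = C (Sum.inr a) ⟨0, hd⟩
      · rw [hCq] at hcc; linarith
      · have hle := hlow _ _ hcc
        rw [hCq] at hle
        have : |q j - C (Sum.inr a) ⟨0, hd⟩| = ((r : ℝ) + (a : ℕ)) * eps d k r hd C := by
          rw [abs_of_nonneg (by linarith)]
          linarith
        linarith [this ▸ hle]
    | Sum.inr a, Sum.inl j =>
      exfalso
      rw [hDinl, hDinr] at h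
      have hs0 := hpos a
      have hsm := hbig a
      rw [one_mul] at h
      by_cases hcc : C (Sum.inl j) ⟨0, hd⟩ = C (Sum.inr a) ⟨0, hd⟩
      · rw [hCq] at hcc; linarith
      · have hle := hlow _ _ hcc
        rw [hCq] at hle
        have : |q j - C (Sum.inr a) ⟨0, hd⟩| = ((r : ℝ) + (a : ℕ)) * eps d k r hd C := by
          rw [abs_of_nonneg (by linarith)]
          linarith
        linarith [this ▸ hle]
    | Sum.inr a, Sum.inr b =>
      rw [hDinr, hDinr] at h
      rw [one_mul, one_mul] at h
      have hsa := hbig a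
      have hsb' := hbig b
      have hsa0 := hpos a
      have hsb0 := hpos b
      by_cases hcc : C (Sum.inr a) ⟨0, hd⟩ = C (Sum.inr b) ⟨0, hd⟩
      · have : ((r : ℝ) + (a : ℕ)) * eps d k r hd C =
            ((r : ℝ) + (b : ℕ)) * eps d k r hd C := by linarith
        have hab : ((r : ℝ) + (a : ℕ)) = ((r : ℝ) + (b : ℕ)) :=
          mul_right_cancel₀ (ne_of_gt hepspos) this
        have : ((a : ℕ) : ℝ) = ((b : ℕ) : ℝ) := by linarith
        have : (a : ℕ) = (b : ℕ) := by exact_mod_cast this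
        exact congrArg Sum.inr (Fin.ext this)
      · exfalso
        have hle := hlow _ _ hcc
        have habs : |C (Sum.inr a) ⟨0, hd⟩ - C (Sum.inr b) ⟨0, hd⟩| < sInf S := by
          rw [abs_sub_lt_iff]
          constructor <;> linarith
        linarith
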